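/- A continuum C (nonempty compact connected metric space) with finite one-dimensional Hausdorff measure H^1(C) < ∞ is totally bounded, hence its isometry class has P(C,ε) < ∞ for every ε > 0, with the bound P(C,ε) ≤ max(1, H^1(C)/ε) whenever 0 < ε < diam(C)/2. -/
import Mathlib


open Metric MeasureTheory
open scoped ENNReal NNReal

/-- One-dimensional Hausdorff measure of a subset of a metric space
(with the Borel σ-algebra). -/
noncomputable def H1 (X : Type*) [MetricSpace X] : Set X → ℝ≥0∞ :=
  letI : MeasurableSpace X := borel X
  haveI : BorelSpace X := ⟨rfl⟩
  fun A => MeasureTheory.Measure.hausdorffMeasure 1 A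

/-- Packing number of a subset of a metric space: the supremum of cardinalities
of finite subsets of `A` whose open `ε`-balls are pairwise disjoint. -/
noncomputable def packingNumber {X : Type*} [MetricSpace X] (A : Set X) (ε : ℝ) : ℕ∞ :=
  ⨆ (s : Finset X) (_ : ↑s ⊆ A ∧ (s : Set X).Pairwise
      fun x y => Disjoint (Metric.ball x ε) (Metric.ball y ε)), (s.card : ℕ∞)

/-- Relative Steiner invariant of a subset `S` of a metric space `X`. -/
noncomputable def relSteiner (X : Type*) [MetricSpace X] (S : Set X) : ℝ≥0∞ :=
  sInf {r : ℝ≥0∞ | ∃ C : Set X, IsCompact C ∧ IsConnected C ∧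
    IsCompact (C ∪ S) ∧ IsConnected (C ∪ S) ∧ r = H1 X C}

/-- Absolute Steiner invariant of a compact metric space `S`. -/
noncomputable def absSteiner (S : Type*) [MetricSpace S] : ℝ≥0∞ :=
  sInf {r : ℝ≥0∞ | ∃ (X : Type) (_ : MetricSpace X) (ι : S → X),
    Isometry ι ∧ r = relSteiner X (Set.range ι)}

lemma ball_measure_lb (C : Type*) [MetricSpace C] [CompactSpace C]
    [ConnectedSpace C] [Nonempty C] [MeasurableSpace C] [BorelSpace C] {ε : ℝ} (hε : 0 < ε)
    (hd : ε < Metric.diam (Set.univ : Set C) / 2) (x : C) :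
    ENNReal.ofReal ε ≤ MeasureTheory.Measure.hausdorffMeasure 1 (Metric.ball x ε) := by
  -- there is a point at distance ≥ ε from x
  have h2 : 2 * ε < Metric.diam (Set.univ : Set C) := by linarith
  obtain ⟨a, -, b, -, hab⟩ : ∃ a ∈ (Set.univ : Set C), ∃ b ∈ (Set.univ : Set C),
      2 * ε < dist a b := by
    by_contra h
    push_neg at h
    have := Metric.diam_le_of_forall_dist_le (by positivity : (0:ℝ) ≤ 2*ε)
      (fun a ha b hb => h a ha b hb)
    linarith
  have hab' : 2 * ε < dist b a := by rwa [dist_comm] at hab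
  have hz : ∃ z : C, ε ≤ dist x z := by
    rcases le_total (dist x a) (dist x b) with h | h
    · refine ⟨b, ?_⟩
      have := dist_triangle a x b
      rw [dist_comm a x] at this
      nlinarith
    · refine ⟨a, ?_⟩
      have := dist_triangle b x a
      rw [dist_comm b x] at this
      nlinarith
  obtain ⟨z, hz⟩ := hz
  -- the 1-Lipschitz map dist x maps ball x ε onto a set containing Ico 0 ε
  have hsub : Set.Ico (0:ℝ) ε ⊆ (dist x) '' (Metric.ball x ε) := by
    rintro t ⟨ht0, htε⟩
    have : Set.Icc (dist x x) (dist x z) ⊆ Set.range (dist x) :=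
      intermediate_value_univ x z (Continuous.dist continuous_const continuous_id)
    have ht : t ∈ Set.Icc (dist x x) (dist x z) := by
      simp only [dist_self, Set.mem_Icc]
      exact ⟨ht0, le_trans htε.le hz⟩
    obtain ⟨y, hy⟩ := this ht
    exact ⟨y, by simpa [Metric.mem_ball, dist_comm] using hy ▸ htε, hy⟩
  have hlip : LipschitzWith 1 (dist x) := LipschitzWith.dist_right x
  calc ENNReal.ofReal ε = MeasureTheory.Measure.hausdorffMeasure 1 (Set.Ico (0:ℝ) ε) := by
        rw [MeasureTheory.hausdorffMeasure_real, Real.volume_Ico, sub_zero]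
    _ ≤ MeasureTheory.Measure.hausdorffMeasure 1 ((dist x) '' (Metric.ball x ε)) :=
        measure_mono hsub
    _ ≤ MeasureTheory.Measure.hausdorffMeasure 1 (Metric.ball x ε) := by
        simpa using hlip.hausdorffMeasure_image_le zero_le_one (Metric.ball x ε)

theorem continuum_totallyBounded_packing (C : Type*) [MetricSpace C] [CompactSpace C]
    [ConnectedSpace C] [Nonempty C] (hfin : H1 C Set.univ < ⊤) :
    TotallyBounded (Set.univ : Set C) ∧
      ∀ ε : ℝ, 0 < ε → ε < Metric.diam (Set.univ : Set C) / 2 →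
        (packingNumber (Set.univ : Set C) ε : ℝ≥0∞) ≤
          max 1 (H1 C Set.univ / ENNReal.ofReal ε) := by
  letI : MeasurableSpace C := borel C
  haveI : BorelSpace C := ⟨rfl⟩
  have hH : H1 C = fun A => MeasureTheory.Measure.hausdorffMeasure 1 A := rfl
  refine ⟨isCompact_univ.totallyBounded, fun ε hε hd => ?_⟩
  set D : ℝ≥0∞ := H1 C Set.univ / ENNReal.ofReal ε with hD
  have hεne : ENNReal.ofReal ε ≠ 0 := ne_of_gt (ENNReal.ofReal_pos.mpr hε)
  have hDlt : D < ⊤ := ENNReal.div_lt_top hfin.ne (by simpa using hεne)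
  set n : ℕ := ⌊D.toReal⌋₊ with hn
  -- every admissible finset has card ≤ n
  have key : ∀ s : Finset C, ((s : Set C) ⊆ Set.univ ∧ (s : Set C).Pairwise
      fun x y => Disjoint (Metric.ball x ε) (Metric.ball y ε)) → s.card ≤ n := by
    rintro s ⟨-, hpair⟩
    have hmeas : ∀ x ∈ s, MeasurableSet (Metric.ball x ε) :=
      fun x _ => Metric.isOpen_ball.measurableSet
    have hsum : (s.card : ℝ≥0∞) * ENNReal.ofReal ε ≤ H1 C Set.univ := by
      calc (s.card : ℝ≥0∞) * ENNReal.ofReal ε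
          = ∑ _x ∈ s, ENNReal.ofReal ε := by simp [mul_comm]
        _ ≤ ∑ x ∈ s, MeasureTheory.Measure.hausdorffMeasure 1 (Metric.ball x ε) :=
            Finset.sum_le_sum (fun x _ => ball_measure_lb C hε hd x)
        _ = MeasureTheory.Measure.hausdorffMeasure 1 (⋃ x ∈ s, Metric.ball x ε) :=
            (measure_biUnion_finset hpair hmeas).symm
        _ ≤ H1 C Set.univ := by rw [hH]; exact measure_mono (Set.subset_univ _)
    have hcard : (s.card : ℝ≥0∞) ≤ D :=
      (ENNReal.le_div_iff_mul_le (Or.inl hεne) (Or.inl ENNReal.ofReal_ne_top)).mpr hsum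
    have : (s.card : ℝ) ≤ D.toReal := by
      have := ENNReal.toReal_mono hDlt.ne hcard
      simpa using this
    exact Nat.le_floor this
  have hpack : packingNumber (Set.univ : Set C) ε ≤ (n : ℕ∞) := by
    refine iSup_le fun s => iSup_le fun hs => ?_
    exact_mod_cast key s hs
  calc (packingNumber (Set.univ : Set C) ε : ℝ≥0∞) ≤ ((n : ℕ∞) : ℝ≥0∞) :=
        ENat.toENNReal_le.mpr hpack
    _ = (n : ℝ≥0∞) := ENat.toENNReal_coe n
    _ ≤ D := by
        rw [← ENNReal.ofReal_natCast]
        rw [← ENNReal.ofReal_toReal hDlt.ne]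
        exact ENNReal.ofReal_le_ofReal (Nat.floor_le ENNReal.toReal_nonneg)
    _ ≤ max 1 D := le_max_right _ _
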